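/- For k ≥ 2, the graph obtained from Δ^L_{k,1} by removing vertex a_2 and all incident edges has diameter three: the distance from c to b_2 is 3. -/

import Mathlib

inductive V (k n : ℕ) where
  | c : V k n
  | a : Fin k → V k n
  | b : Fin (k + n) → V k n
deriving DecidableEq, Fintype

def adj (k n : ℕ) : V k n → V k n → Prop
  | .a i, .a j => i ≠ j
  | .b i, .b j => i ≠ j
  | .a i, .b j => (j : ℕ) = (i : ℕ) ∨ (j : ℕ) = k + i
  | .b j, .a i => (j : ℕ) = (i : ℕ) ∨ (j : ℕ) = k + i
  | .c, .a _ => True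
  | .a _, .c => True
  | _, _ => False

instance (k n : ℕ) : DecidableRel (adj k n) := fun x y => by
  cases x <;> cases y <;> simp only [adj] <;> infer_instance

def DeltaL (k n : ℕ) : SimpleGraph (V k n) where
  Adj := adj k n
  symm := by
    constructor
    intro x y h
    cases x <;> cases y <;> simp_all [adj] <;> tauto
  loopless := by
    constructor
    intro x h
    cases x <;> simp_all [adj]

section helper
variable {k : ℕ}

lemma le3 (hk : 2 ≤ k) (h1 : (1:ℕ) < k)
    (u v : {x : V k 1 | x ≠ V.a ⟨1, h1⟩}) :
    ((DeltaL k 1).induce {x : V k 1 | x ≠ V.a ⟨1, h1⟩}).dist u v ≤ 3 := by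
  set G := ((DeltaL k 1).induce {x : V k 1 | x ≠ V.a ⟨1, h1⟩}) with hG
  have hadj : ∀ u v : {x : V k 1 | x ≠ V.a ⟨1, h1⟩}, adj k 1 u.1 v.1 → G.Adj u v :=
    fun _ _ h => h
  -- canonical vertices
  set c : {x : V k 1 | x ≠ V.a ⟨1, h1⟩} := ⟨V.c, by simp⟩ with hc
  set a0 : {x : V k 1 | x ≠ V.a ⟨1, h1⟩} := ⟨V.a ⟨0, by omega⟩, by simp⟩ with ha0
  set b0 : {x : V k 1 | x ≠ V.a ⟨1, h1⟩} := ⟨V.b ⟨0, by omega⟩, by simp⟩ with hb0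
  have e_ca0 : G.Adj c a0 := hadj _ _ (by simp [adj, c, a0])
  have e_a0b0 : G.Adj a0 b0 := hadj _ _ (by simp [adj, a0, b0])
  -- main bound from c to any b j
  have hcb : ∀ (j : Fin (k+1)) (hj : V.b j ∈ {x : V k 1 | x ≠ V.a ⟨1, h1⟩}),
      G.dist c ⟨V.b j, hj⟩ ≤ 3 := by
    intro j hj
    by_cases h0 : (j : ℕ) = 0
    · have hb : b0 = ⟨V.b j, hj⟩ := by
        rw [hb0]; exact Subtype.ext (congrArg V.b (Fin.ext h0.symm))
      rw [← hb]
      calc G.dist c b0 ≤ (SimpleGraph.Walk.cons e_ca0 e_a0b0.toWalk).length := SimpleGraph.dist_le _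
        _ ≤ 3 := by simp
    · have e : G.Adj b0 ⟨V.b j, hj⟩ := hadj _ _ (by simp [adj, Fin.ext_iff, b0]; omega)
      calc G.dist c _ ≤ (SimpleGraph.Walk.cons e_ca0 (SimpleGraph.Walk.cons e_a0b0 e.toWalk)).length :=
            SimpleGraph.dist_le _
        _ ≤ 3 := by simp
  -- bound from a i to b j
  have hab : ∀ (i : Fin k) (hi : V.a i ∈ {x : V k 1 | x ≠ V.a ⟨1, h1⟩})
      (j : Fin (k+1)) (hj : V.b j ∈ {x : V k 1 | x ≠ V.a ⟨1, h1⟩}),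
      G.dist ⟨V.a i, hi⟩ ⟨V.b j, hj⟩ ≤ 3 := by
    intro i hi j hj
    by_cases h0 : (j : ℕ) = (i : ℕ)
    · have e : G.Adj ⟨V.a i, hi⟩ ⟨V.b j, hj⟩ := hadj _ _ (by simp [adj]; omega)
      calc G.dist _ _ ≤ e.toWalk.length := SimpleGraph.dist_le _
        _ ≤ 3 := by simp
    · have e1 : G.Adj ⟨V.a i, hi⟩ ⟨V.b ⟨(i:ℕ), by omega⟩, by simp⟩ :=
        hadj _ _ (by simp [adj])
      have e2 : G.Adj ⟨V.b ⟨(i:ℕ), by omega⟩, by simp⟩ ⟨V.b j, hj⟩ :=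
        hadj _ _ (by simp [adj, Fin.ext_iff]; omega)
      calc G.dist _ _ ≤ (SimpleGraph.Walk.cons e1 e2.toWalk).length := SimpleGraph.dist_le _
        _ ≤ 3 := by simp
  obtain ⟨x, hx⟩ := u
  obtain ⟨y, hy⟩ := v
  cases x with
  | c =>
    cases y with
    | c =>
      have : (⟨V.c, hx⟩ : {x : V k 1 | x ≠ V.a ⟨1, h1⟩}) = ⟨V.c, hy⟩ := rfl
      rw [this, SimpleGraph.dist_self]; omega
    | a i =>
      have e : G.Adj ⟨V.c, hx⟩ ⟨V.a i, hy⟩ := hadj _ _ (by simp [adj])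
      calc G.dist _ _ ≤ e.toWalk.length := SimpleGraph.dist_le _
        _ ≤ 3 := by simp
    | b j => exact hcb j hy
  | a i =>
    cases y with
    | c =>
      rw [SimpleGraph.dist_comm]
      have e : G.Adj ⟨V.c, hy⟩ ⟨V.a i, hx⟩ := hadj _ _ (by simp [adj])
      calc G.dist _ _ ≤ e.toWalk.length := SimpleGraph.dist_le _
        _ ≤ 3 := by simp
    | a i' =>
      by_cases h : i = i'
      · subst h
        have : (⟨V.a i, hx⟩ : {x : V k 1 | x ≠ V.a ⟨1, h1⟩}) = ⟨V.a i, hy⟩ := rfl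
        rw [this, SimpleGraph.dist_self]; omega
      · have e : G.Adj ⟨V.a i, hx⟩ ⟨V.a i', hy⟩ := hadj _ _ h
        calc G.dist _ _ ≤ e.toWalk.length := SimpleGraph.dist_le _
          _ ≤ 3 := by simp
    | b j => exact hab i hx j hy
  | b j =>
    cases y with
    | c => rw [SimpleGraph.dist_comm]; exact hcb j hx
    | a i => rw [SimpleGraph.dist_comm]; exact hab i hy j hx
    | b j' =>
      by_cases h : j = j'
      · subst h
        have : (⟨V.b j, hx⟩ : {x : V k 1 | x ≠ V.a ⟨1, h1⟩}) = ⟨V.b j, hy⟩ := rfl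
        rw [this, SimpleGraph.dist_self]; omega
      · have e : G.Adj ⟨V.b j, hx⟩ ⟨V.b j', hy⟩ := hadj _ _ h
        calc G.dist _ _ ≤ e.toWalk.length := SimpleGraph.dist_le _
          _ ≤ 3 := by simp

end helper

lemma eq3 {k : ℕ} (hk : 2 ≤ k) (h1 : (1:ℕ) < k) :
    ((DeltaL k 1).induce {x : V k 1 | x ≠ V.a ⟨1, h1⟩}).dist
      ⟨V.c, by simp⟩ ⟨V.b ⟨1, Nat.lt_succ_of_lt h1⟩, by simp⟩ = 3 := by
  set G := ((DeltaL k 1).induce {x : V k 1 | x ≠ V.a ⟨1, h1⟩}) with hG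
  have hadj : ∀ u v : {x : V k 1 | x ≠ V.a ⟨1, h1⟩}, adj k 1 u.1 v.1 → G.Adj u v :=
    fun _ _ h => h
  set c : {x : V k 1 | x ≠ V.a ⟨1, h1⟩} := ⟨V.c, by simp⟩ with hc
  set a0 : {x : V k 1 | x ≠ V.a ⟨1, h1⟩} := ⟨V.a ⟨0, by omega⟩, by simp⟩ with ha0
  set b0 : {x : V k 1 | x ≠ V.a ⟨1, h1⟩} := ⟨V.b ⟨0, by omega⟩, by simp⟩ with hb0
  set b1 : {x : V k 1 | x ≠ V.a ⟨1, h1⟩} := ⟨V.b ⟨1, by omega⟩, by simp⟩ with hb1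
  have e_ca0 : G.Adj c a0 := hadj _ _ (by simp [adj, c, a0])
  have e_a0b0 : G.Adj a0 b0 := hadj _ _ (by simp [adj, a0, b0])
  have e_b0b1 : G.Adj b0 b1 := hadj _ _ (by simp [adj, Fin.ext_iff, b0, b1])
  let w : G.Walk c b1 :=
    SimpleGraph.Walk.cons e_ca0 (SimpleGraph.Walk.cons e_a0b0 e_b0b1.toWalk)
  have hwl : w.length = 3 := by simp [w]
  have hle : G.dist c b1 ≤ 3 := hwl ▸ SimpleGraph.dist_le w
  have hne : c ≠ b1 := by simp [hc, hb1]
  have h0 : G.dist c b1 ≠ 0 :=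
    SimpleGraph.dist_ne_zero_iff_ne_and_reachable.mpr ⟨hne, ⟨w⟩⟩
  have hd1 : G.dist c b1 ≠ 1 := by
    rw [ne_eq, SimpleGraph.dist_eq_one_iff_adj]
    intro h
    exact h
  have hd2 : G.dist c b1 ≠ 2 := by
    intro h
    obtain ⟨p, hp⟩ := SimpleGraph.exists_walk_of_dist_ne_zero h0
    rw [h] at hp
    obtain ⟨x, hcx, q, rfl⟩ := SimpleGraph.Walk.exists_eq_cons_of_ne hne p
    simp only [SimpleGraph.Walk.length_cons] at hp
    have hxb : G.Adj x b1 := q.adj_of_length_eq_one (by omega)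
    obtain ⟨xv, hxm⟩ := x
    cases xv with
    | c => exact hcx
    | a i =>
      have hi : (i : ℕ) ≠ 1 := by
        intro h'
        exact hxm (by simp [Fin.ext_iff, h'])
      have h2 : adj k 1 (V.a i) (V.b ⟨1, by omega⟩) := hxb
      simp only [adj] at h2
      have hik := i.isLt
      omega
    | b j => exact hcx
  omega

theorem stmt18 (k : ℕ) (hk : 2 ≤ k) :
    (((DeltaL k 1).induce {x : V k 1 | x ≠ V.a ⟨1, by omega⟩}).dist
        ⟨V.c, by simp⟩ ⟨V.b ⟨1, by omega⟩, by simp⟩ = 3) ∧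
    (∀ u v : {x : V k 1 | x ≠ V.a ⟨1, by omega⟩},
      ((DeltaL k 1).induce {x : V k 1 | x ≠ V.a ⟨1, by omega⟩}).dist u v ≤ 3) := by
  exact ⟨eq3 hk (by omega), fun u v => le3 hk (by omega) u v⟩
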